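/- Let n ≥ 3 and let P, Q : Fin n → ℝ² be counterclockwise strictly convex polygons such that (P i).2 = (Q i).2 for every index i (corresponding vertices lie on the same horizontal line) and (P i).2 ≠ (P (i+1)).2 for every i (indices mod n; no edge is horizontal). Then for every t ∈ [0,1], the map i ↦ (1−t)·P(i) + t·Q(i) is a counterclockwise strictly convex polygon. In other words, the linear morph from P to Q is strictly convex, and it is unidirectional since every vertex moves along its own horizontal line. -/

import Mathlib

noncomputable section

/-- Cross product of two planar vectors: cross((a,b),(c,d)) = a·d − b·c. -/
def cross (a b : ℝ × ℝ) : ℝ := a.1 * b.2 - a.2 * b.1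

/-- Standard inner product on ℝ². -/
def inner2 (a b : ℝ × ℝ) : ℝ := a.1 * b.1 + a.2 * b.2

/-- `p` is a counterclockwise convex polygon: pairwise distinct vertices and
`cross (p(i+1) − p(i)) (p(j) − p(i)) ≥ 0` for all `i` and all `j ∉ {i, i+1}`. -/
def IsCCWConvex {n : ℕ} [NeZero n] (p : Fin n → ℝ × ℝ) : Prop :=
  Function.Injective p ∧
    ∀ i j : Fin n, j ≠ i → j ≠ i + 1 → 0 ≤ cross (p (i + 1) - p i) (p j - p i)

/-- `p` is a counterclockwise strictly convex polygon. -/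
def IsCCWStrictConvex {n : ℕ} [NeZero n] (p : Fin n → ℝ × ℝ) : Prop :=
  Function.Injective p ∧
    ∀ i j : Fin n, j ≠ i → j ≠ i + 1 → 0 < cross (p (i + 1) - p i) (p j - p i)

/-- `p` is a convex polygon: it or its index-reversal is counterclockwise convex. -/
def IsConvexPolygon {n : ℕ} [NeZero n] (p : Fin n → ℝ × ℝ) : Prop :=
  IsCCWConvex p ∨ IsCCWConvex (p ∘ Fin.rev)

/-- `p` is a strictly convex polygon: it or its index-reversal is
counterclockwise strictly convex. -/
def IsStrictConvexPolygon {n : ℕ} [NeZero n] (p : Fin n → ℝ × ℝ) : Prop :=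
  IsCCWStrictConvex p ∨ IsCCWStrictConvex (p ∘ Fin.rev)

/-- The polygon `p` is `d`-monotone: there are indices `s ≠ t` such that both of
the two paths from `s` to `t` around the cyclic sequence (one in each cyclic
direction) have strictly increasing inner product with `d` along the traversal. -/
def PolyMonotoneIn {n : ℕ} [NeZero n] (d : ℝ × ℝ) (p : Fin n → ℝ × ℝ) : Prop :=
  ∃ s t : Fin n, s ≠ t ∧
    (∀ k : ℕ, k < ((t - s : Fin n) : ℕ) →
      inner2 d (p (s + (Fin.ofNat n k))) < inner2 d (p (s + (Fin.ofNat n k) + 1))) ∧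
    (∀ k : ℕ, k < ((s - t : Fin n) : ℕ) →
      inner2 d (p (s - (Fin.ofNat n k))) < inner2 d (p (s - (Fin.ofNat n k) - 1)))

/-- The linear morph between two counterclockwise strictly convex polygons whose
corresponding vertices lie on the same horizontal lines, none of whose edges is
horizontal, is strictly convex at every time instant (and unidirectional, each
vertex moving along its own horizontal line). -/
theorem level_morph_strictConvex {n : ℕ} [NeZero n] (hn : 3 ≤ n)
    (P Q : Fin n → ℝ × ℝ)
    (hP : IsCCWStrictConvex P) (hQ : IsCCWStrictConvex Q)
    (hlevel : ∀ i : Fin n, (P i).2 = (Q i).2)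
    (hnohoriz : ∀ i : Fin n, (P i).2 ≠ (P (i + 1)).2) :
    ∀ t ∈ Set.Icc (0 : ℝ) 1,
      IsCCWStrictConvex (fun i => (1 - t) • P i + t • Q i) := by
  intro t ht
  obtain ⟨ht0, ht1⟩ := ht
  set R : Fin n → ℝ × ℝ := fun i => (1 - t) • P i + t • Q i with hRdef
  have key : ∀ i j : Fin n, cross (R (i + 1) - R i) (R j - R i)
      = (1 - t) * cross (P (i + 1) - P i) (P j - P i)
        + t * cross (Q (i + 1) - Q i) (Q j - Q i) := by
    intro i j
    have h1 := hlevel i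
    have h2 := hlevel j
    have h3 := hlevel (i + 1)
    simp only [hRdef, cross, Prod.fst_sub, Prod.snd_sub, Prod.fst_add, Prod.snd_add,
      Prod.smul_fst, Prod.smul_snd, smul_eq_mul]
    rw [← h1, ← h2, ← h3]
    ring
  have pos : ∀ i j : Fin n, j ≠ i → j ≠ i + 1 →
      0 < cross (R (i + 1) - R i) (R j - R i) := by
    intro i j hji hji1
    rw [key]
    have hp := hP.2 i j hji hji1
    have hq := hQ.2 i j hji hji1
    rcases ht0.lt_or_eq with h | h
    · have h1 : 0 ≤ (1 - t) * cross (P (i + 1) - P i) (P j - P i) :=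
        mul_nonneg (by linarith) hp.le
      have h2 : 0 < t * cross (Q (i + 1) - Q i) (Q j - Q i) := mul_pos h hq
      linarith
    · rw [← h]
      simpa using hp
  obtain ⟨m, rfl⟩ : ∃ m, n = m + 3 := ⟨n - 3, by omega⟩
  have h10 : (1 : Fin (m + 3)) ≠ 0 := by
    rw [Fin.ne_iff_vne, Fin.val_one, Fin.val_zero]
    omega
  have h20 : (1 + 1 : Fin (m + 3)) ≠ 0 := by
    simp only [ne_eq, Fin.ext_iff, Fin.val_add, Fin.val_one, Fin.val_zero]
    rw [Nat.mod_eq_of_lt (by omega)]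
    omega
  have one_ne : ∀ b : Fin (m + 3), b + 1 ≠ b := by
    intro b h
    exact h10 (add_eq_left.mp h)
  have two_ne : ∀ b : Fin (m + 3), b + 1 + 1 ≠ b := by
    intro b h
    rw [add_assoc] at h
    exact h20 (add_eq_left.mp h)
  constructor
  · intro a b hab
    by_contra hne
    by_cases h1 : a = b + 1
    · have hz : R (b + 1) = R b := h1 ▸ hab
      have hcp := pos b (b + 1 + 1) (two_ne b) (fun h => one_ne (b + 1) h)
      rw [hz, sub_self] at hcp
      simp [cross] at hcp
    · have hcp := pos b a hne h1
      rw [hab, sub_self] at hcp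
      simp [cross] at hcp
  · exact pos
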